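/- Let n ≥ 2 and let (a_1, ..., a_n) be a smooth sequence of relatively prime positive integers, and let S = ⟨a_1, ..., a_n⟩. Then S is symmetric and S is cyclotomic. -/

import Mathlib

open Polynomial
open scoped Classical

/-- A numerical semigroup: a subset of `ℕ` containing `0`, closed under addition,
with finite complement in `ℕ`. -/
structure NumericalSemigroup where
  carrier : Set ℕ
  zero_mem : 0 ∈ carrier
  add_mem : ∀ ⦃a b : ℕ⦄, a ∈ carrier → b ∈ carrier → a + b ∈ carrier
  finite_compl : Set.Finite carrierᶜ

namespace NumericalSemigroup

/-- The Hilbert series `H_S(x) = Σ_{s ∈ S} x^s`. -/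
noncomputable def H (S : NumericalSemigroup) : PowerSeries ℤ :=
  PowerSeries.mk fun n => if n ∈ S.carrier then 1 else 0

/-- The Hilbert series evaluated at `x^w`: `H_S(x^w) = Σ_{s ∈ S} x^{w·s}`. -/
noncomputable def Hexp (S : NumericalSemigroup) (w : ℕ) : PowerSeries ℤ :=
  PowerSeries.mk fun n => if ∃ s ∈ S.carrier, n = w * s then 1 else 0

/-- The semigroup polynomial `P_S(x) = (1-x)·H_S(x) = 1 + (x-1)·Σ_{s ∉ S} x^s`. -/
noncomputable def P (S : NumericalSemigroup) : Polynomial ℤ :=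
  1 + (X - 1) * ∑ s ∈ S.finite_compl.toFinset, X ^ s

/-- The Frobenius number: the largest integer not in `S` (equal to `-1` when `S = ℕ`). -/
noncomputable def Frob (S : NumericalSemigroup) : ℤ :=
  (insert (-1 : ℤ) (S.finite_compl.toFinset.image fun n : ℕ => (n : ℤ))).max'
    (Finset.insert_nonempty _ _)

/-- The genus: the number of gaps of `S`. -/
noncomputable def genus (S : NumericalSemigroup) : ℕ := S.finite_compl.toFinset.card

/-- `S` viewed as a set of integers. -/
def intSet (S : NumericalSemigroup) : Set ℤ := (fun n : ℕ => (n : ℤ)) '' S.carrier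

/-- `S` is cyclotomic if every complex root of `P_S` lies in the closed unit disc. -/
def IsCyclotomicNS (S : NumericalSemigroup) : Prop :=
  ∀ z : ℂ, Polynomial.aeval z S.P = 0 → ‖z‖ ≤ 1

/-- `S` is symmetric if for every integer `z`, `z ∈ S ↔ F(S) - z ∉ S`. -/
def IsSymmetric (S : NumericalSemigroup) : Prop :=
  ∀ z : ℤ, z ∈ S.intSet ↔ S.Frob - z ∉ S.intSet

/-- The Apéry set of `S` with respect to `m`: elements `s ∈ S` with `s - m ∉ S`
(in particular all `s ∈ S` with `s < m`). -/
def Ap (S : NumericalSemigroup) (m : ℕ) : Set ℕ :=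
  {s ∈ S.carrier | ∀ t ∈ S.carrier, t + m ≠ s}

end NumericalSemigroup

/-- `d_k = gcd(a_1, …, a_k)`. -/
def dseq (a : ℕ → ℕ) (k : ℕ) : ℕ := (Finset.Icc 1 k).gcd a

/-- `c_k = d_{k-1} / d_k`. -/
def cseq (a : ℕ → ℕ) (k : ℕ) : ℕ := dseq a (k - 1) / dseq a k

/-- The numerical semigroup (as a set) generated by `a_1, …, a_k`. -/
def gen (a : ℕ → ℕ) (k : ℕ) : Set ℕ := ↑(AddSubmonoid.closure (a '' Set.Icc 1 k))

/-- The sequence `(a_1, …, a_n)` is smooth if `c_k·a_k ∈ ⟨a_1, …, a_{k-1}⟩` for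
every `k = 2, …, n`. -/
def SmoothSeq (a : ℕ → ℕ) (n : ℕ) : Prop :=
  ∀ k, 2 ≤ k → k ≤ n → cseq a k * a k ∈ gen a (k - 1)

section Aux
variable {a : ℕ → ℕ} {n : ℕ}

lemma mem_gen_iff {k s : ℕ} :
    s ∈ gen a k ↔ ∃ f : ℕ → ℕ, s = ∑ j ∈ Finset.Icc 1 k, f j * a j := by
  constructor
  · intro hs
    induction hs using AddSubmonoid.closure_induction with
    | mem x hx =>
      obtain ⟨j, hj, rfl⟩ := hx
      rw [Set.mem_Icc] at hj
      refine ⟨fun i => if i = j then 1 else 0, ?_⟩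
      simp only [ite_mul, one_mul, zero_mul, Finset.sum_ite_eq', Finset.mem_Icc]
      simp [hj.1, hj.2]
    | zero => exact ⟨0, by simp⟩
    | add x y hx hy ihx ihy =>
      obtain ⟨f, rfl⟩ := ihx
      obtain ⟨g, rfl⟩ := ihy
      exact ⟨f + g, by simp [add_mul, Finset.sum_add_distrib]⟩
  · rintro ⟨f, rfl⟩
    exact AddSubmonoid.sum_mem _ fun j hj => by
      rw [Finset.mem_Icc] at hj
      have : a j ∈ AddSubmonoid.closure (a '' Set.Icc 1 k) :=
        AddSubmonoid.subset_closure ⟨j, Set.mem_Icc.2 hj, rfl⟩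
      simpa [smul_eq_mul] using AddSubmonoid.nsmul_mem _ this (f j)

lemma gen_add {k : ℕ} {x y : ℕ} (hx : x ∈ gen a k) (hy : y ∈ gen a k) : x + y ∈ gen a k :=
  AddSubmonoid.add_mem _ hx hy

lemma gen_nsmul {k : ℕ} {x : ℕ} (hx : x ∈ gen a k) (m : ℕ) : m * x ∈ gen a k := by
  simpa [smul_eq_mul, gen] using AddSubmonoid.nsmul_mem _ hx m

lemma d_dvd {j k : ℕ} (h1 : 1 ≤ j) (h2 : j ≤ k) : dseq a k ∣ a j :=
  Finset.gcd_dvd (Finset.mem_Icc.2 ⟨h1, h2⟩)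

lemma d_dvd_gen {k s : ℕ} (hs : s ∈ gen a k) : dseq a k ∣ s := by
  obtain ⟨f, rfl⟩ := mem_gen_iff.1 hs
  exact Finset.dvd_sum fun j hj => Dvd.dvd.mul_left
    (d_dvd (Finset.mem_Icc.1 hj).1 (Finset.mem_Icc.1 hj).2) _

lemma Icc_one_insert {k : ℕ} (hk : 1 ≤ k) :
    Finset.Icc 1 k = insert k (Finset.Icc 1 (k - 1)) := by
  ext j; simp only [Finset.mem_Icc, Finset.mem_insert]; omega

lemma dseq_eq_gcd {k : ℕ} (hk : 1 ≤ k) :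
    dseq a k = Nat.gcd (dseq a (k - 1)) (a k) := by
  rw [dseq, Icc_one_insert hk, Finset.gcd_insert]
  rw [Nat.gcd_comm]
  rfl

lemma dseq_one : dseq a 1 = a 1 := by
  simp [dseq, Finset.Icc_self, Finset.gcd_singleton]

lemma dpos (hn : 2 ≤ n) (hpos : ∀ i, 1 ≤ i → i ≤ n → 0 < a i) {k : ℕ} (hk : 1 ≤ k) :
    0 < dseq a k := by
  rcases Nat.eq_zero_or_pos (dseq a k) with h | h
  · exfalso
    have := Finset.gcd_eq_zero_iff.1 h 1 (Finset.mem_Icc.2 ⟨le_refl 1, hk⟩)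
    have := hpos 1 le_rfl (by omega)
    omega
  · exact h

lemma d_dvd_d (hk : 1 ≤ k) : dseq a k ∣ dseq a (k - 1) := by
  rw [dseq_eq_gcd hk]; exact Nat.gcd_dvd_left _ _

lemma c_mul_d (hn : 2 ≤ n) (hpos : ∀ i, 1 ≤ i → i ≤ n → 0 < a i) {k : ℕ} (hk : 1 ≤ k) :
    cseq a k * dseq a k = dseq a (k - 1) := by
  rw [cseq, Nat.div_mul_cancel (d_dvd_d hk)]

lemma c_pos (hn : 2 ≤ n) (hpos : ∀ i, 1 ≤ i → i ≤ n → 0 < a i) {k : ℕ} (hk2 : 2 ≤ k) :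
    0 < cseq a k := by
  have h1 : 0 < dseq a (k - 1) := dpos hn hpos (by omega)
  have := c_mul_d hn hpos (a := a) (by omega : 1 ≤ k)
  rcases Nat.eq_zero_or_pos (cseq a k) with h | h
  · rw [h] at this; omega
  · exact h

lemma d_dvd_c_mul_a (hn : 2 ≤ n) (hpos : ∀ i, 1 ≤ i → i ≤ n → 0 < a i) {k : ℕ} (hk2 : 2 ≤ k) :
    dseq a (k - 1) ∣ cseq a k * a k := by
  obtain ⟨e, he⟩ : dseq a k ∣ a k := d_dvd (by omega) le_rfl
  exact ⟨e, by rw [he, ← c_mul_d hn hpos (by omega : 1 ≤ k)]; ring⟩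

lemma cdvd (hn : 2 ≤ n) (hpos : ∀ i, 1 ≤ i → i ≤ n → 0 < a i) {k : ℕ} (hk2 : 2 ≤ k)
    {Δ : ℤ} (h : (dseq a (k - 1) : ℤ) ∣ Δ * (a k : ℤ)) : (cseq a k : ℤ) ∣ Δ := by
  set g := dseq a k with hg
  have hgpos : 0 < g := dpos hn hpos (by omega)
  obtain ⟨e, he⟩ : g ∣ a k := d_dvd (by omega) le_rfl
  have hco : Nat.Coprime (cseq a k) e := by
    have hgcd : Nat.gcd (dseq a (k - 1)) (a k) = g := (dseq_eq_gcd (by omega)).symm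
    have := Nat.coprime_div_gcd_div_gcd (m := dseq a (k - 1)) (n := a k) (by rw [hgcd]; exact hgpos)
    rw [hgcd] at this
    have he' : a k / g = e := by rw [he]; exact Nat.mul_div_cancel_left e hgpos
    rwa [he', ← cseq] at this
  have hcd : (cseq a k : ℤ) * g ∣ Δ * ((g : ℤ) * e) := by
    rw [← Nat.cast_mul, c_mul_d hn hpos (by omega : 1 ≤ k), ← Nat.cast_mul, ← he]
    exact h
  have : (cseq a k : ℤ) ∣ Δ * e := by
    rcases hcd with ⟨t, ht⟩
    refine ⟨t, ?_⟩
    have hg0 : (g : ℤ) ≠ 0 := by exact_mod_cast hgpos.ne'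
    have h3 : (g : ℤ) * (Δ * e - cseq a k * t) = 0 := by linear_combination ht
    have h4 := (mul_eq_zero.1 h3).resolve_left hg0
    linear_combination h4
  exact (Nat.isCoprime_iff_coprime.2 hco).dvd_of_dvd_mul_right this


lemma Icc_two_insert {k : ℕ} (hk : 2 ≤ k) :
    Finset.Icc 2 k = insert k (Finset.Icc 2 (k - 1)) := by
  ext j; simp only [Finset.mem_Icc, Finset.mem_insert]; omega

lemma rep_unique (hn : 2 ≤ n) (hpos : ∀ i, 1 ≤ i → i ≤ n → 0 < a i) :
    ∀ k, k ≤ n → ∀ (μ μ' : ℤ) (f f' : ℕ → ℕ),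
    (∀ j, 2 ≤ j → j ≤ k → f j < cseq a j) → (∀ j, 2 ≤ j → j ≤ k → f' j < cseq a j) →
    μ * (a 1 : ℤ) + ∑ j ∈ Finset.Icc 2 k, (f j : ℤ) * a j
      = μ' * a 1 + ∑ j ∈ Finset.Icc 2 k, (f' j : ℤ) * a j →
    μ = μ' ∧ ∀ j, 2 ≤ j → j ≤ k → f j = f' j := by
  intro k
  induction k with
  | zero =>
    intro _ μ μ' f f' _ _ h
    simp only [show Finset.Icc 2 0 = ∅ by rfl, Finset.sum_empty, add_zero] at h
    have ha : (a 1 : ℤ) ≠ 0 := by exact_mod_cast (hpos 1 le_rfl (by omega)).ne'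
    exact ⟨mul_right_cancel₀ ha h, fun j h2 h0 => by omega⟩
  | succ k ih =>
    intro hkn μ μ' f f' hf hf' h
    rcases Nat.lt_or_ge (k + 1) 2 with hk2 | hk2
    · have hk0 : k = 0 := by omega
      subst hk0
      simp only [show Finset.Icc 2 1 = ∅ by rfl, Finset.sum_empty, add_zero] at h
      have ha : (a 1 : ℤ) ≠ 0 := by exact_mod_cast (hpos 1 le_rfl (by omega)).ne'
      exact ⟨mul_right_cancel₀ ha h, fun j h2 h1 => by omega⟩
    · have hsplit : Finset.Icc 2 (k + 1) = insert (k+1) (Finset.Icc 2 k) := by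
        simpa using Icc_two_insert (k := k + 1) hk2
      have hnot : (k+1) ∉ Finset.Icc 2 k := by simp [Finset.mem_Icc]
      rw [hsplit, Finset.sum_insert hnot, Finset.sum_insert hnot] at h
      have hdvd1 : ∀ j, 1 ≤ j → j ≤ k → (dseq a k : ℤ) ∣ (a j : ℤ) :=
        fun j h1 h2 => Int.natCast_dvd_natCast.2 (d_dvd h1 h2)
      have hsum : ∑ j ∈ Finset.Icc 2 k, ((f' j : ℤ) - f j) * a j
          = (∑ j ∈ Finset.Icc 2 k, (f' j : ℤ) * a j)
            - ∑ j ∈ Finset.Icc 2 k, (f j : ℤ) * a j := by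
        rw [← Finset.sum_sub_distrib]
        exact Finset.sum_congr rfl fun j _ => by ring
      have key : (dseq a k : ℤ) ∣ ((f (k+1) : ℤ) - f' (k+1)) * a (k+1) := by
        have heq : ((f (k+1) : ℤ) - f' (k+1)) * a (k+1)
            = (μ' - μ) * a 1 + ∑ j ∈ Finset.Icc 2 k, ((f' j : ℤ) - f j) * a j := by
          rw [hsum]; linear_combination h
        rw [heq]
        refine dvd_add (Dvd.dvd.mul_left (hdvd1 1 le_rfl (by omega)) _) ?_
        exact Finset.dvd_sum fun j hj => by
          have hj' := Finset.mem_Icc.1 hj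
          exact Dvd.dvd.mul_left (hdvd1 j (by omega) hj'.2) _
      have hc : (cseq a (k+1) : ℤ) ∣ ((f (k+1) : ℤ) - f' (k+1)) :=
        cdvd hn hpos (k := k + 1) hk2 (by simpa using key)
      have hfe : f (k+1) = f' (k+1) := by
        have h1 := hf (k+1) hk2 le_rfl
        have h2 := hf' (k+1) hk2 le_rfl
        have hz : (f (k+1) : ℤ) - f' (k+1) = 0 := Int.eq_zero_of_abs_lt_dvd hc (by
          rw [abs_sub_lt_iff]
          constructor <;> push_cast <;> omega)
        omega
      rw [hfe] at h
      have h' : μ * (a 1 : ℤ) + ∑ j ∈ Finset.Icc 2 k, (f j : ℤ) * a j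
          = μ' * a 1 + ∑ j ∈ Finset.Icc 2 k, (f' j : ℤ) * a j := by linarith
      obtain ⟨hμ, hrest⟩ := ih (by omega) μ μ' f f'
        (fun j hj1 hj2 => hf j hj1 (by omega)) (fun j hj1 hj2 => hf' j hj1 (by omega)) h'
      refine ⟨hμ, fun j hj1 hj2 => ?_⟩
      rcases Nat.lt_or_ge j (k+1) with hlt | hge
      · exact hrest j hj1 (by omega)
      · have : j = k+1 := by omega
        rw [this]; exact hfe

lemma rep_exists (hn : 2 ≤ n) (hpos : ∀ i, 1 ≤ i → i ≤ n → 0 < a i) :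
    ∀ k, 1 ≤ k → k ≤ n → ∀ z : ℤ, (dseq a k : ℤ) ∣ z →
    ∃ μ : ℤ, ∃ f : ℕ → ℕ, (∀ j, 2 ≤ j → j ≤ k → f j < cseq a j) ∧
      z = μ * a 1 + ∑ j ∈ Finset.Icc 2 k, (f j : ℤ) * a j := by
  intro k
  induction k with
  | zero => omega
  | succ k ih =>
    intro _ hkn z hz
    rcases Nat.lt_or_ge (k + 1) 2 with hk2 | hk2
    · -- k + 1 = 1
      have hk0 : k = 0 := by omega
      subst hk0
      rw [dseq_one] at hz
      obtain ⟨w, hw⟩ := hz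
      exact ⟨w, 0, fun j h2 h1 => by omega, by
        simp only [show Finset.Icc 2 1 = ∅ by rfl, Finset.sum_empty, add_zero, hw]; ring⟩
    · have hk1 : 1 ≤ k := by omega
      set g := dseq a (k+1) with hgdef
      set d := dseq a k with hddef
      set c := cseq a (k+1) with hcdef
      have hd1 : d = dseq a ((k+1) - 1) := by simp [hddef]
      have hgg : Nat.gcd d (a (k+1)) = g := by
        rw [hddef, hgdef, dseq_eq_gcd (by omega : 1 ≤ k + 1)]; simp
      have hcpos : 0 < c := c_pos hn hpos hk2
      -- Bezout
      have hbez : (g : ℤ) = (d : ℤ) * Int.gcdA d (a (k+1)) + (a (k+1) : ℤ) * Int.gcdB d (a (k+1)) := by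
        have := Int.gcd_eq_gcd_ab (d : ℤ) (a (k+1) : ℤ)
        rwa [Int.gcd_natCast_natCast, hgg] at this
      obtain ⟨w, hw⟩ := hz
      set m : ℤ := Int.gcdB (d : ℤ) (a (k+1)) * w with hm
      have hstep1 : (d : ℤ) ∣ z - m * a (k+1) := by
        refine ⟨Int.gcdA (d : ℤ) (a (k+1)) * w, ?_⟩
        rw [hw, hbez]; ring
      set r : ℕ := (m % (c : ℤ)).toNat with hr
      have hrc : r < c := by
        have h1 : m % (c : ℤ) < c := Int.emod_lt_of_pos m (by exact_mod_cast hcpos)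
        have h2 : 0 ≤ m % (c : ℤ) := Int.emod_nonneg m (by exact_mod_cast hcpos.ne')
        omega
      have hcast : (r : ℤ) = m % (c : ℤ) := by
        have h2 : 0 ≤ m % (c : ℤ) := Int.emod_nonneg m (by exact_mod_cast hcpos.ne')
        simp [hr, Int.toNat_of_nonneg h2]
      have hstep2 : (d : ℤ) ∣ z - (r : ℤ) * a (k+1) := by
        have hca : (d : ℤ) ∣ (c : ℤ) * a (k+1) := by
          have := d_dvd_c_mul_a hn hpos (k := k+1) hk2
          simp only [Nat.add_sub_cancel] at this
          exact_mod_cast this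
        have hmr : (c : ℤ) ∣ m - r :=
          ⟨m / (c : ℤ), by
            rw [hcast]
            have := Int.mul_ediv_add_emod m (c : ℤ)
            linarith⟩
        obtain ⟨q, hq⟩ := hmr
        have : z - (r : ℤ) * a (k+1) = (z - m * a (k+1)) + q * ((c : ℤ) * a (k+1)) := by
          have : (m : ℤ) - r = c * q := hq
          linear_combination (a (k+1) : ℤ) * this
        rw [this]
        exact dvd_add hstep1 (Dvd.dvd.mul_left hca q)
      obtain ⟨μ, f, hfb, hfs⟩ := ih hk1 (by omega) (z - (r : ℤ) * a (k+1)) hstep2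
      refine ⟨μ, Function.update f (k+1) r, ?_, ?_⟩
      · intro j h2 h1
        by_cases hj : j = k+1
        · subst hj; rw [Function.update_self]; exact hrc
        · rw [Function.update_of_ne hj]; exact hfb j h2 (by omega)
      · have hsplit : Finset.Icc 2 (k + 1) = insert (k+1) (Finset.Icc 2 k) := by
          simpa using Icc_two_insert (k := k + 1) hk2
        have hnot : (k+1) ∉ Finset.Icc 2 k := by simp [Finset.mem_Icc]
        rw [hsplit, Finset.sum_insert hnot, Function.update_self]
        have hco : ∑ j ∈ Finset.Icc 2 k, ((Function.update f (k+1) r j : ℕ) : ℤ) * a j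
            = ∑ j ∈ Finset.Icc 2 k, (f j : ℤ) * a j :=
          Finset.sum_congr rfl fun j hj => by
            have hj' := Finset.mem_Icc.1 hj
            rw [Function.update_of_ne (by omega)]
        rw [hco]
        linarith [hfs]

lemma gen_rep (hn : 2 ≤ n) (hpos : ∀ i, 1 ≤ i → i ≤ n → 0 < a i) (hsmooth : SmoothSeq a n) :
    ∀ k, 1 ≤ k → k ≤ n → ∀ s ∈ gen a k,
    ∃ f : ℕ → ℕ, (∀ j, 2 ≤ j → j ≤ k → f j < cseq a j) ∧
      s = ∑ j ∈ Finset.Icc 1 k, f j * a j := by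
  intro k
  induction k with
  | zero => omega
  | succ k ih =>
    intro _ hkn s hs
    rcases Nat.lt_or_ge (k + 1) 2 with hk2 | hk2
    · have hk0 : k = 0 := by omega
      subst hk0
      obtain ⟨f, hf⟩ := mem_gen_iff.1 hs
      exact ⟨f, fun j h2 h1 => by omega, hf⟩
    · have hk1 : 1 ≤ k := by omega
      set c := cseq a (k+1) with hcdef
      have hcpos : 0 < c := c_pos hn hpos hk2
      obtain ⟨m, hm⟩ := mem_gen_iff.1 hs
      have hsplit : Finset.Icc 1 (k + 1) = insert (k+1) (Finset.Icc 1 k) :=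
        by simpa using Icc_one_insert (k := k+1) (by omega)
      have hnot : (k+1) ∉ Finset.Icc 1 k := by simp [Finset.mem_Icc]
      rw [hsplit, Finset.sum_insert hnot] at hm
      set t := ∑ j ∈ Finset.Icc 1 k, m j * a j with ht
      have htmem : t ∈ gen a k := mem_gen_iff.2 ⟨m, rfl⟩
      set q := m (k+1) / c with hq
      set r := m (k+1) % c with hrr
      have hmr : m (k+1) = c * q + r := by
        rw [hq, hrr, Nat.div_add_mod]
      have hca : c * a (k+1) ∈ gen a k := by
        have := hsmooth (k+1) hk2 hkn
        simpa using this
      have ht' : t + q * (c * a (k+1)) ∈ gen a k := gen_add htmem (gen_nsmul hca q)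
      obtain ⟨f, hfb, hfs⟩ := ih hk1 (by omega) _ ht'
      refine ⟨Function.update f (k+1) r, ?_, ?_⟩
      · intro j h2 h1
        by_cases hj : j = k+1
        · subst hj; rw [Function.update_self]; exact Nat.mod_lt _ hcpos
        · rw [Function.update_of_ne hj]; exact hfb j h2 (by omega)
      · rw [hsplit, Finset.sum_insert hnot, Function.update_self]
        have hco : ∑ j ∈ Finset.Icc 1 k, (Function.update f (k+1) r j) * a j
            = ∑ j ∈ Finset.Icc 1 k, f j * a j :=
          Finset.sum_congr rfl fun j hj => by
            have hj' := Finset.mem_Icc.1 hj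
            rw [Function.update_of_ne (by omega)]
        rw [hco, ← hfs, hm, hmr]
        ring

lemma a_mem_gen {j k : ℕ} (h1 : 1 ≤ j) (h2 : j ≤ k) : a j ∈ gen a k :=
  AddSubmonoid.subset_closure ⟨j, Set.mem_Icc.2 ⟨h1, h2⟩, rfl⟩

open NumericalSemigroup in
lemma mem_intSet_iff (hn : 2 ≤ n) (hpos : ∀ i, 1 ≤ i → i ≤ n → 0 < a i)
    (hsmooth : SmoothSeq a n) (S : NumericalSemigroup) (hS : S.carrier = gen a n) (z : ℤ) :
    z ∈ S.intSet ↔ ∃ μ : ℤ, 0 ≤ μ ∧ ∃ f : ℕ → ℕ,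
      (∀ j, 2 ≤ j → j ≤ n → f j < cseq a j) ∧
      z = μ * a 1 + ∑ j ∈ Finset.Icc 2 n, (f j : ℤ) * a j := by
  have hsplit : Finset.Icc 1 n = insert 1 (Finset.Icc 2 n) := by
    ext j; simp only [Finset.mem_Icc, Finset.mem_insert]; omega
  have hnot : (1:ℕ) ∉ Finset.Icc 2 n := by simp
  constructor
  · rintro ⟨s, hsmem, rfl⟩
    rw [hS] at hsmem
    obtain ⟨f, hfb, hfs⟩ := gen_rep hn hpos hsmooth n (by omega) le_rfl s hsmem
    refine ⟨(f 1 : ℤ), by positivity, f, hfb, ?_⟩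
    rw [hfs, hsplit, Finset.sum_insert hnot]
    push_cast
    ring
  · rintro ⟨μ, hμ, f, hfb, rfl⟩
    refine ⟨μ.toNat * a 1 + ∑ j ∈ Finset.Icc 2 n, f j * a j, ?_, ?_⟩
    · rw [hS]
      refine gen_add (gen_nsmul (a_mem_gen le_rfl (by omega)) μ.toNat) ?_
      exact AddSubmonoid.sum_mem _ fun j hj => by
        have hj' := Finset.mem_Icc.1 hj
        exact gen_nsmul (a_mem_gen (by omega) hj'.2) (f j)
    · push_cast [Int.toNat_of_nonneg hμ]
      ring

open NumericalSemigroup in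
lemma symmetric_aux (hn : 2 ≤ n) (hpos : ∀ i, 1 ≤ i → i ≤ n → 0 < a i)
    (hgcd : dseq a n = 1) (hsmooth : SmoothSeq a n)
    (S : NumericalSemigroup) (hS : S.carrier = gen a n) (z : ℤ) :
    z ∈ S.intSet ↔
      ((∑ j ∈ Finset.Icc 2 n, ((cseq a j : ℤ) - 1) * a j) - a 1) - z ∉ S.intSet := by
  set F0 : ℤ := (∑ j ∈ Finset.Icc 2 n, ((cseq a j : ℤ) - 1) * a j) - a 1 with hF0
  obtain ⟨μ, f, hfb, hz⟩ := rep_exists hn hpos n (by omega) le_rfl z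
    (by rw [hgcd]; exact one_dvd z)
  set g : ℕ → ℕ := fun j => cseq a j - 1 - f j with hg
  have hgc : ∀ j ∈ Finset.Icc 2 n, (g j : ℤ) = (cseq a j : ℤ) - 1 - f j := by
    intro j hj
    have hj' := Finset.mem_Icc.1 hj
    have h1 := hfb j hj'.1 hj'.2
    have h2 := c_pos hn hpos hj'.1
    simp only [hg]
    push_cast [Nat.cast_sub (by omega : 1 ≤ cseq a j), Nat.cast_sub (by omega : f j ≤ cseq a j - 1)]
    ring
  have hgb : ∀ j, 2 ≤ j → j ≤ n → g j < cseq a j := by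
    intro j h2j hjn
    have := c_pos hn hpos h2j
    simp only [hg]; omega
  have h1 : ∑ j ∈ Finset.Icc 2 n, (g j : ℤ) * a j
      = (∑ j ∈ Finset.Icc 2 n, ((cseq a j : ℤ) - 1) * a j)
        - ∑ j ∈ Finset.Icc 2 n, (f j : ℤ) * a j := by
    rw [← Finset.sum_sub_distrib]
    exact Finset.sum_congr rfl fun j hj => by rw [hgc j hj]; ring
  have hF : F0 - z = (-μ - 1) * a 1 + ∑ j ∈ Finset.Icc 2 n, (g j : ℤ) * a j := by
    rw [hF0]
    linear_combination (-1 : ℤ) * h1 - hz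
  rcases le_or_gt 0 μ with hμ | hμ
  · have hzin : z ∈ S.intSet :=
      (mem_intSet_iff hn hpos hsmooth S hS z).2 ⟨μ, hμ, f, hfb, hz⟩
    have hFnot : F0 - z ∉ S.intSet := by
      intro hmem
      obtain ⟨ν, hν, f'', hfb'', he⟩ := (mem_intSet_iff hn hpos hsmooth S hS _).1 hmem
      have := rep_unique hn hpos n le_rfl (-μ - 1) ν g f'' hgb hfb'' (by rw [← hF, he])
      omega
    exact iff_of_true hzin hFnot
  · have hznot : z ∉ S.intSet := by
      intro hmem
      obtain ⟨ν, hν, f'', hfb'', he⟩ := (mem_intSet_iff hn hpos hsmooth S hS _).1 hmem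
      have := rep_unique hn hpos n le_rfl μ ν f f'' hfb hfb'' (by rw [← hz, he])
      omega
    have hFin : F0 - z ∈ S.intSet :=
      (mem_intSet_iff hn hpos hsmooth S hS _).2 ⟨-μ - 1, by omega, g, hgb, hF⟩
    exact iff_of_false hznot (not_not_intro hFin)

open NumericalSemigroup in
lemma frob_eq (hn : 2 ≤ n) (hpos : ∀ i, 1 ≤ i → i ≤ n → 0 < a i)
    (hgcd : dseq a n = 1) (hsmooth : SmoothSeq a n)
    (S : NumericalSemigroup) (hS : S.carrier = gen a n) :
    S.Frob = (∑ j ∈ Finset.Icc 2 n, ((cseq a j : ℤ) - 1) * a j) - a 1 := by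
  set F0 : ℤ := (∑ j ∈ Finset.Icc 2 n, ((cseq a j : ℤ) - 1) * a j) - a 1 with hF0
  have hsym := symmetric_aux hn hpos hgcd hsmooth S hS
  have hnonneg : ∀ z ∈ S.intSet, 0 ≤ z := by rintro _ ⟨s, _, rfl⟩; positivity
  have hneg1 : (-1 : ℤ) ∉ S.intSet := fun h => by have := hnonneg _ h; omega
  have hm1F : -1 ≤ F0 := by
    have h2 : F0 - (-1) ∈ S.intSet := not_not.1 (fun hc => hneg1 ((hsym (-1)).2 hc))
    have := hnonneg _ h2
    omega
  have hub : ∀ x ∈ insert (-1:ℤ) (S.finite_compl.toFinset.image fun m : ℕ => (m:ℤ)),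
      x ≤ F0 := by
    intro x hx
    rcases Finset.mem_insert.1 hx with rfl | hx
    · exact hm1F
    · obtain ⟨gn, hgmem, rfl⟩ := Finset.mem_image.1 hx
      have hgn : gn ∉ S.carrier := (Set.Finite.mem_toFinset _).1 hgmem
      have hgnot : (gn : ℤ) ∉ S.intSet := by
        rintro ⟨s, hs, heq⟩
        exact hgn (by rwa [Nat.cast_inj.1 heq] at hs)
      have h2 : F0 - gn ∈ S.intSet := not_not.1 (fun hc => hgnot ((hsym gn).2 hc))
      have := hnonneg _ h2
      omega
  have hF0mem : F0 ∈ insert (-1:ℤ) (S.finite_compl.toFinset.image fun m : ℕ => (m:ℤ)) := by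
    by_cases hc : F0 = -1
    · rw [hc]; exact Finset.mem_insert_self _ _
    · have hge : 0 ≤ F0 := by omega
      have h0 : (0:ℤ) ∈ S.intSet := ⟨0, S.zero_mem, rfl⟩
      have hF0not : F0 ∉ S.intSet := by
        have := (hsym 0).1 h0
        simpa using this
      have hnc : F0.toNat ∉ S.carrier := by
        intro hc2
        exact hF0not ⟨F0.toNat, hc2, Int.toNat_of_nonneg hge⟩
      refine Finset.mem_insert_of_mem (Finset.mem_image.2 ⟨F0.toNat, ?_, Int.toNat_of_nonneg hge⟩)
      exact (Set.Finite.mem_toFinset _).2 hnc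
  exact le_antisymm (Finset.max'_le _ _ _ hub) (Finset.le_max' _ _ hF0mem)

noncomputable def Hg (a : ℕ → ℕ) (k : ℕ) : PowerSeries ℤ :=
  PowerSeries.mk fun m => if m ∈ gen a k then (1:ℤ) else 0

lemma gen_mono {k : ℕ} : gen a k ⊆ gen a (k+1) := by
  intro x hx
  exact AddSubmonoid.closure_mono
    (Set.image_mono (Set.Icc_subset_Icc le_rfl (by omega))) hx

lemma mem_gen_one_iff {s : ℕ} : s ∈ gen a 1 ↔ a 1 ∣ s := by
  rw [mem_gen_iff]
  constructor
  · rintro ⟨f, rfl⟩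
    simp only [Finset.Icc_self, Finset.sum_singleton]
    exact Dvd.intro_left _ rfl
  · rintro ⟨w, rfl⟩
    exact ⟨fun _ => w, by simp [Finset.Icc_self, mul_comm]⟩

lemma unique_r (hn : 2 ≤ n) (hpos : ∀ i, 1 ≤ i → i ≤ n → 0 < a i) {k : ℕ}
    (hk2 : 2 ≤ k) {t t' r r' : ℕ}
    (ht : dseq a (k-1) ∣ t) (ht' : dseq a (k-1) ∣ t')
    (hr : r < cseq a k) (hr' : r' < cseq a k)
    (h : t + r * a k = t' + r' * a k) : r = r' := by
  obtain ⟨u, hu⟩ := ht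
  obtain ⟨v, hv⟩ := ht'
  have hdvd : (dseq a (k-1) : ℤ) ∣ ((r : ℤ) - r') * a k := by
    refine ⟨(v : ℤ) - u, ?_⟩
    have hz : (t : ℤ) + r * a k = (t' : ℤ) + r' * a k := by exact_mod_cast h
    have hu' : (t : ℤ) = (dseq a (k-1) : ℤ) * u := by exact_mod_cast hu
    have hv' : (t' : ℤ) = (dseq a (k-1) : ℤ) * v := by exact_mod_cast hv
    linear_combination hz - hu' + hv'
  have hc := cdvd hn hpos hk2 hdvd
  have := Int.eq_zero_of_abs_lt_dvd hc (by
    rw [abs_sub_lt_iff]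
    constructor <;> push_cast <;> omega)
  omega

lemma Hg_step (hn : 2 ≤ n) (hpos : ∀ i, 1 ≤ i → i ≤ n → 0 < a i) (hsmooth : SmoothSeq a n)
    {k : ℕ} (hk2 : 2 ≤ k) (hkn : k ≤ n) :
    Hg a k = Hg a (k-1) * ∑ r ∈ Finset.range (cseq a k), (PowerSeries.X : PowerSeries ℤ) ^ (r * a k) := by
  have hapos : 0 < a k := hpos k (by omega) hkn
  ext m
  rw [Finset.mul_sum, map_sum]
  have hterm : ∀ r ∈ Finset.range (cseq a k),
      (PowerSeries.coeff m) (Hg a (k-1) * PowerSeries.X ^ (r * a k))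
        = if r * a k ≤ m ∧ (m - r * a k) ∈ gen a (k-1) then 1 else 0 := by
    intro r _
    rw [PowerSeries.coeff_mul_X_pow']
    by_cases h1 : r * a k ≤ m
    · simp only [h1, if_true, true_and, Hg, PowerSeries.coeff_mk]
    · simp [h1]
  rw [Finset.sum_congr rfl hterm, Finset.sum_boole]
  simp only [Hg, PowerSeries.coeff_mk]
  by_cases hm : m ∈ gen a k
  · rw [if_pos hm]
    obtain ⟨f, hfb, hfs⟩ := gen_rep hn hpos hsmooth k (by omega) hkn m hm
    have hsplit : Finset.Icc 1 k = insert k (Finset.Icc 1 (k-1)) := Icc_one_insert (by omega)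
    have hnot : k ∉ Finset.Icc 1 (k-1) := by simp [Finset.mem_Icc]; omega
    rw [hsplit, Finset.sum_insert hnot] at hfs
    set t := ∑ j ∈ Finset.Icc 1 (k-1), f j * a j with htdef
    have htmem : t ∈ gen a (k-1) := mem_gen_iff.2 ⟨f, rfl⟩
    have hr0 : f k < cseq a k := hfb k hk2 le_rfl
    have hfilter : (Finset.range (cseq a k)).filter
        (fun r => r * a k ≤ m ∧ (m - r * a k) ∈ gen a (k-1)) = {f k} := by
      apply Finset.eq_singleton_iff_unique_mem.2
      constructor
      · refine Finset.mem_filter.2 ⟨Finset.mem_range.2 hr0, ?_, ?_⟩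
        · rw [hfs]; exact Nat.le_add_right _ _
        · rw [hfs, Nat.add_sub_cancel_left]; exact htmem
      · intro r hrr
        obtain ⟨hrange, hle, hmem⟩ := Finset.mem_filter.1 hrr
        refine unique_r hn hpos hk2 (d_dvd_gen hmem) (d_dvd_gen htmem)
          (Finset.mem_range.1 hrange) hr0 ?_
        rw [Nat.sub_add_cancel hle, hfs]; ring
    rw [hfilter]
    simp
  · rw [if_neg hm]
    have hfilter : (Finset.range (cseq a k)).filter
        (fun r => r * a k ≤ m ∧ (m - r * a k) ∈ gen a (k-1)) = ∅ := by
      apply Finset.filter_false_of_mem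
      intro r _
      rintro ⟨hle, hmem⟩
      apply hm
      have hsub : gen a (k-1) ⊆ gen a k := by
        have : k - 1 + 1 = k := by omega
        rw [← this]
        exact gen_mono
      have h1 : m - r * a k ∈ gen a k := hsub hmem
      have h2 : r * a k ∈ gen a k := gen_nsmul (a_mem_gen (by omega) le_rfl) r
      have := gen_add h1 h2
      rwa [Nat.sub_add_cancel hle] at this
    rw [hfilter]
    simp

lemma Hg_prod (hn : 2 ≤ n) (hpos : ∀ i, 1 ≤ i → i ≤ n → 0 < a i) (hsmooth : SmoothSeq a n) :
    ∀ k, 1 ≤ k → k ≤ n →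
    Hg a k * ∏ j ∈ Finset.Icc 1 k, (1 - (PowerSeries.X : PowerSeries ℤ) ^ (a j))
      = ∏ j ∈ Finset.Icc 2 k, (1 - (PowerSeries.X : PowerSeries ℤ) ^ (cseq a j * a j)) := by
  intro k
  induction k with
  | zero => omega
  | succ k ih =>
    intro _ hkn
    rcases Nat.lt_or_ge (k + 1) 2 with hk2 | hk2
    · have hk0 : k = 0 := by omega
      subst hk0
      have ha1 : 0 < a 1 := hpos 1 le_rfl (by omega)
      rw [show Finset.Icc 2 1 = ∅ by rfl, Finset.prod_empty,
        Finset.Icc_self, Finset.prod_singleton]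
      ext m
      rw [mul_sub, mul_one, map_sub, PowerSeries.coeff_mul_X_pow']
      simp only [Hg, PowerSeries.coeff_mk, PowerSeries.coeff_one]
      by_cases hm0 : m = 0
      · subst hm0
        rw [if_pos (mem_gen_one_iff.2 (dvd_zero _)), if_neg (by omega), if_pos rfl]
        ring
      · rw [if_neg hm0]
        by_cases hdvd : m ∈ gen a 1
        · have hd := mem_gen_one_iff.1 hdvd
          have hle : a 1 ≤ m := Nat.le_of_dvd (by omega) hd
          rw [if_pos hdvd, if_pos hle,
            if_pos (mem_gen_one_iff.2 ((Nat.dvd_sub hd dvd_rfl)))]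
          ring
        · rw [if_neg hdvd]
          by_cases hle : a 1 ≤ m
          · rw [if_pos hle, if_neg ?_]
            · ring
            · intro hc
              apply hdvd
              have hd := mem_gen_one_iff.1 hc
              apply mem_gen_one_iff.2
              have := Nat.dvd_add hd (dvd_refl (a 1))
              rwa [Nat.sub_add_cancel hle] at this
          · rw [if_neg hle]; ring
    · have hk1 : 1 ≤ k := by omega
      have hstep := Hg_step hn hpos hsmooth hk2 hkn
      simp only [Nat.add_sub_cancel] at hstep
      have hsplit1 : Finset.Icc 1 (k+1) = insert (k+1) (Finset.Icc 1 k) := by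
        simpa using Icc_one_insert (k := k+1) (by omega)
      have hsplit2 : Finset.Icc 2 (k+1) = insert (k+1) (Finset.Icc 2 k) := by
        simpa using Icc_two_insert (k := k+1) hk2
      have hnot1 : (k+1) ∉ Finset.Icc 1 k := by simp [Finset.mem_Icc]
      have hnot2 : (k+1) ∉ Finset.Icc 2 k := by simp [Finset.mem_Icc]
      rw [hsplit1, Finset.prod_insert hnot1, hsplit2, Finset.prod_insert hnot2, hstep]
      have hgeom : (∑ r ∈ Finset.range (cseq a (k+1)),
            (PowerSeries.X : PowerSeries ℤ) ^ (r * a (k+1)))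
          * (1 - (PowerSeries.X : PowerSeries ℤ) ^ (a (k+1)))
          = 1 - (PowerSeries.X : PowerSeries ℤ) ^ (cseq a (k+1) * a (k+1)) := by
        have hpow : ∀ r : ℕ, (PowerSeries.X : PowerSeries ℤ) ^ (r * a (k+1))
            = ((PowerSeries.X : PowerSeries ℤ) ^ (a (k+1))) ^ r := by
          intro r; rw [← pow_mul, mul_comm]
        rw [Finset.sum_congr rfl (fun r _ => hpow r)]
        have := geom_sum_mul ((PowerSeries.X : PowerSeries ℤ) ^ (a (k+1))) (cseq a (k+1))
        have h2 : (∑ r ∈ Finset.range (cseq a (k+1)),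
              ((PowerSeries.X : PowerSeries ℤ) ^ (a (k+1))) ^ r)
            * (1 - (PowerSeries.X : PowerSeries ℤ) ^ (a (k+1)))
            = 1 - ((PowerSeries.X : PowerSeries ℤ) ^ (a (k+1))) ^ (cseq a (k+1)) := by
          linear_combination -this
        rw [h2, ← pow_mul, mul_comm (a (k+1)) (cseq a (k+1))]
      calc Hg a k * (∑ r ∈ Finset.range (cseq a (k+1)),
              (PowerSeries.X : PowerSeries ℤ) ^ (r * a (k+1)))
            * ((1 - (PowerSeries.X : PowerSeries ℤ) ^ (a (k+1)))
              * ∏ j ∈ Finset.Icc 1 k, (1 - (PowerSeries.X : PowerSeries ℤ) ^ (a j)))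
          = (Hg a k * ∏ j ∈ Finset.Icc 1 k, (1 - (PowerSeries.X : PowerSeries ℤ) ^ (a j)))
            * ((∑ r ∈ Finset.range (cseq a (k+1)),
              (PowerSeries.X : PowerSeries ℤ) ^ (r * a (k+1)))
              * (1 - (PowerSeries.X : PowerSeries ℤ) ^ (a (k+1)))) := by ring
        _ = (∏ j ∈ Finset.Icc 2 k, (1 - (PowerSeries.X : PowerSeries ℤ) ^ (cseq a j * a j)))
            * (1 - (PowerSeries.X : PowerSeries ℤ) ^ (cseq a (k+1) * a (k+1))) := by
            rw [ih hk1 (by omega), hgeom]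
        _ = (1 - (PowerSeries.X : PowerSeries ℤ) ^ (cseq a (k+1) * a (k+1)))
            * ∏ j ∈ Finset.Icc 2 k, (1 - (PowerSeries.X : PowerSeries ℤ) ^ (cseq a j * a j)) := by
            ring

open NumericalSemigroup in
lemma coeP (S : NumericalSemigroup) :
    (S.P : PowerSeries ℤ)
      = (1 - PowerSeries.X) * PowerSeries.mk (fun m => if m ∈ S.carrier then (1:ℤ) else 0) := by
  set G := S.finite_compl.toFinset with hG
  have hGmem : ∀ m : ℕ, m ∈ G ↔ m ∉ S.carrier := by
    intro m
    rw [hG, Set.Finite.mem_toFinset, Set.mem_compl_iff]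
  have hQ : ∀ m : ℕ, (PowerSeries.coeff m) ((∑ s ∈ G, (Polynomial.X : Polynomial ℤ) ^ s : Polynomial ℤ) : PowerSeries ℤ)
      = if m ∈ G then 1 else 0 := by
    intro m
    rw [← Polynomial.coeToPowerSeries.ringHom_apply, map_sum, map_sum]
    have : ∀ s ∈ G, (PowerSeries.coeff m)
        (Polynomial.coeToPowerSeries.ringHom ((Polynomial.X : Polynomial ℤ) ^ s))
        = if m = s then 1 else 0 := by
      intro s _
      rw [Polynomial.coeToPowerSeries.ringHom_apply, Polynomial.coe_pow, Polynomial.coe_X,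
        PowerSeries.coeff_X_pow]
    rw [Finset.sum_congr rfl this, Finset.sum_ite_eq G m (fun _ => (1:ℤ))]
  ext m
  rw [P, Polynomial.coe_add, Polynomial.coe_one, Polynomial.coe_mul, Polynomial.coe_sub,
    Polynomial.coe_one, Polynomial.coe_X]
  rw [sub_mul, one_mul, sub_mul, one_mul]
  rw [map_add, map_sub, map_sub]
  have hXmul : ∀ (f : PowerSeries ℤ) (m : ℕ), (PowerSeries.coeff m) (PowerSeries.X * f)
      = if 1 ≤ m then (PowerSeries.coeff (m - 1)) f else 0 := by
    intro f m
    rw [mul_comm, ← pow_one (PowerSeries.X : PowerSeries ℤ), PowerSeries.coeff_mul_X_pow']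
  rw [hXmul, hXmul]
  simp only [hQ, PowerSeries.coeff_one, PowerSeries.coeff_mk]
  by_cases hm : m = 0
  · subst hm
    have h0G : (0:ℕ) ∉ G := fun h => (hGmem 0).1 h S.zero_mem
    simp [h0G, S.zero_mem]
  · have h1m : 1 ≤ m := by omega
    by_cases h1 : m ∈ S.carrier <;> by_cases h2 : (m-1) ∈ S.carrier <;>
      simp [hm, h1m, hGmem, h1, h2]

open NumericalSemigroup in
lemma poly_id (hn : 2 ≤ n) (hpos : ∀ i, 1 ≤ i → i ≤ n → 0 < a i)
    (hsmooth : SmoothSeq a n)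
    (S : NumericalSemigroup) (hS : S.carrier = gen a n) :
    S.P * ∏ j ∈ Finset.Icc 1 n, (1 - (Polynomial.X : Polynomial ℤ) ^ (a j))
      = (1 - Polynomial.X) * ∏ j ∈ Finset.Icc 2 n, (1 - (Polynomial.X : Polynomial ℤ) ^ (cseq a j * a j)) := by
  apply Polynomial.coe_inj.1
  have hcoe : ∀ (t : Finset ℕ) (g : ℕ → ℕ),
      ((∏ j ∈ t, (1 - (Polynomial.X : Polynomial ℤ) ^ (g j)) : Polynomial ℤ) : PowerSeries ℤ)
        = ∏ j ∈ t, (1 - (PowerSeries.X : PowerSeries ℤ) ^ (g j)) := by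
    intro t g
    rw [← Polynomial.coeToPowerSeries.ringHom_apply, map_prod]
    exact Finset.prod_congr rfl fun j _ => by
      simp [Polynomial.coeToPowerSeries.ringHom_apply, Polynomial.coe_sub, Polynomial.coe_one,
        Polynomial.coe_pow, Polynomial.coe_X]
  rw [Polynomial.coe_mul, Polynomial.coe_mul, Polynomial.coe_sub, Polynomial.coe_one,
    Polynomial.coe_X, hcoe, hcoe, coeP S]
  have hHg : PowerSeries.mk (fun m => if m ∈ S.carrier then (1:ℤ) else 0) = Hg a n := by
    rw [Hg, hS]
  rw [hHg, mul_assoc, Hg_prod hn hpos hsmooth n (by omega) le_rfl]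

end Aux

open NumericalSemigroup in
/-- For a smooth sequence `(a_1, …, a_n)` of relatively prime positive integers and
`S = ⟨a_1, …, a_n⟩`: `S` is symmetric and `S` is cyclotomic. -/
theorem smooth_symmetric_and_cyclotomic (n : ℕ) (hn : 2 ≤ n) (a : ℕ → ℕ)
    (hpos : ∀ i, 1 ≤ i → i ≤ n → 0 < a i) (hgcd : dseq a n = 1) (hsmooth : SmoothSeq a n)
    (S : NumericalSemigroup) (hS : S.carrier = gen a n) :
    S.IsSymmetric ∧ S.IsCyclotomicNS := by
  constructor
  · intro z
    rw [frob_eq hn hpos hgcd hsmooth S hS]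
    exact symmetric_aux hn hpos hgcd hsmooth S hS z
  · intro z hz
    have hid := poly_id hn hpos hsmooth S hS
    have h0 := congrArg (Polynomial.aeval z) hid
    simp only [map_mul, map_sub, map_one, map_pow, map_prod, Polynomial.aeval_X] at h0
    rw [hz, zero_mul] at h0
    rcases mul_eq_zero.1 h0.symm with h | h
    · rw [show z = 1 by linear_combination -h]
      simp
    · obtain ⟨j, hj, hj0⟩ := Finset.prod_eq_zero_iff.1 h
      have hj' := Finset.mem_Icc.1 hj
      have hm : cseq a j * a j ≠ 0 := by
        have h1 := c_pos hn hpos hj'.1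
        have h2 := hpos j (by omega) hj'.2
        exact Nat.mul_ne_zero (by omega) (by omega)
      have hz1 : z ^ (cseq a j * a j) = 1 := by linear_combination -hj0
      by_contra hgt
      push_neg at hgt
      have hpow := one_lt_pow₀ hgt hm
      rw [← norm_pow, hz1] at hpow
      simp at hpow
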